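/- For all real x with 0 < x < π, the function k(x) := x²(π − x)² − (π² − πx + x²)·sin²(x) is strictly negative. -/

import Mathlib

open Real

lemma sin_ge_sub_cube' {x : ℝ} (hx : 0 ≤ x) : x - x ^ 3 / 6 ≤ Real.sin x := by
  have key : ∀ t ∈ Set.Ici (0:ℝ), 0 ≤ Real.sin t - (t - t ^ 3 / 6) := by
    have hmono : MonotoneOn (fun t => Real.sin t - (t - t ^ 3 / 6)) (Set.Ici (0:ℝ)) := by
      apply monotoneOn_of_deriv_nonneg (convex_Ici 0)
      · fun_prop
      · fun_prop
      · intro t ht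
        simp only [interior_Ici, Set.mem_Ioi] at ht
        have hd : HasDerivAt (fun t => Real.sin t - (t - t ^ 3 / 6))
            (Real.cos t - (1 - 3 * t ^ 2 / 6)) t := by
          have h1 : HasDerivAt Real.sin (Real.cos t) t := Real.hasDerivAt_sin t
          have h2 : HasDerivAt (fun t : ℝ => t - t ^ 3 / 6) (1 - 3 * t ^ 2 / 6) t := by
            have := ((hasDerivAt_pow 3 t).div_const 6)
            exact ((hasDerivAt_id' t).sub this).congr_deriv (by norm_num)
          exact h1.sub h2
        rw [hd.deriv]
        have := Real.one_sub_sq_div_two_le_cos (x := t)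
        linarith
    intro t ht
    have h0 : (fun t => Real.sin t - (t - t ^ 3 / 6)) 0 ≤ (fun t => Real.sin t - (t - t ^ 3 / 6)) t :=
      hmono (Set.self_mem_Ici) ht ht
    simpa using h0
  have := key x hx
  linarith

set_option maxHeartbeats 1000000 in
theorem k_neg (x : ℝ) (hx : 0 < x) (hxpi : x < π) :
    x ^ 2 * (π - x) ^ 2 - (π ^ 2 - π * x + x ^ 2) * Real.sin x ^ 2 < 0 := by
  have pi_lb : (3.141592 : ℝ) < π := Real.pi_gt_d6
  have pi_ub : π < 3.1416 := by
    have := Real.pi_lt_d6; linarith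
  have main : ∀ y : ℝ, 0 < y → y ≤ π / 2 →
      y ^ 2 * (π - y) ^ 2 - (π ^ 2 - π * y + y ^ 2) * Real.sin y ^ 2 < 0 := by
    intro y hy hy2
    have hs := sin_ge_sub_cube' hy.le
    have hylt2 : y < 2 := by nlinarith
    have h1 : 0 < y - y ^ 3 / 6 := by nlinarith [mul_pos hy hy, mul_pos (mul_pos hy hy) hy]
    have hsq : (y - y ^ 3 / 6) ^ 2 ≤ Real.sin y ^ 2 :=
      pow_le_pow_left₀ h1.le hs 2
    have hfac : 0 < π ^ 2 - π * y + y ^ 2 := by nlinarith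
    have key : 0 < (π ^ 2 - π * y + y ^ 2) * (y - y ^ 3 / 6) ^ 2 - y ^ 2 * (π - y) ^ 2 := by
      have hu : (0:ℝ) ≤ π - 2 * y := by linarith
      have hq1 : (9.8695:ℝ) < π ^ 2 := by nlinarith
      have hq2 : π ^ 2 < 9.8697 := by nlinarith
      have hq0 : (0:ℝ) < π ^ 2 := by positivity
      have e2 : (0:ℝ) ≤ 10 * π ^ 2 - π ^ 4 / 3 := by nlinarith [hq1, hq2]
      have e3 : (0:ℝ) ≤ 40 * π ^ 2 - 7 * π ^ 4 / 3 := by nlinarith [hq1, hq2]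
      have e4 : (0:ℝ) ≤ 80 * π ^ 2 - 19 * π ^ 4 / 3 + π ^ 6 / 36 := by nlinarith [hq1, hq2, sq_nonneg (π ^ 2 - 9.8696), mul_nonneg (sq_nonneg (π ^ 2 - 9.8696)) hq0.le]
      have e5 : (0:ℝ) ≤ 80 * π ^ 2 - 8 * π ^ 4 + π ^ 6 / 12 := by nlinarith [hq1, hq2, sq_nonneg (π ^ 2 - 9.8696), mul_nonneg (sq_nonneg (π ^ 2 - 9.8696)) hq0.le]
      have e6 : (0:ℝ) < 32 * π ^ 2 - 4 * π ^ 4 + π ^ 6 / 12 := by nlinarith [hq1, hq2, sq_nonneg (π ^ 2 - 9.8696), mul_nonneg (sq_nonneg (π ^ 2 - 9.8696)) hq0.le]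
      have t1 : (0:ℝ) ≤ π ^ 2 * (y ^ 3 * (π - 2 * y) ^ 5) := by positivity
      have t2 : (0:ℝ) ≤ (10 * π ^ 2 - π ^ 4 / 3) * (y ^ 4 * (π - 2 * y) ^ 4) := by
        exact mul_nonneg e2 (by positivity)
      have t3 : (0:ℝ) ≤ (40 * π ^ 2 - 7 * π ^ 4 / 3) * (y ^ 5 * (π - 2 * y) ^ 3) := by
        exact mul_nonneg e3 (mul_nonneg (by positivity) (by positivity))
      have t4 : (0:ℝ) ≤ (80 * π ^ 2 - 19 * π ^ 4 / 3 + π ^ 6 / 36) * (y ^ 6 * (π - 2 * y) ^ 2) := by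
        exact mul_nonneg e4 (by positivity)
      have t5 : (0:ℝ) ≤ (80 * π ^ 2 - 8 * π ^ 4 + π ^ 6 / 12) * (y ^ 7 * (π - 2 * y)) := by
        exact mul_nonneg e5 (mul_nonneg (by positivity) hu)
      have t6 : (0:ℝ) < (32 * π ^ 2 - 4 * π ^ 4 + π ^ 6 / 12) * y ^ 8 := by
        exact mul_pos e6 (by positivity)
      have hid : π ^ 6 * ((π ^ 2 - π * y + y ^ 2) * (y - y ^ 3 / 6) ^ 2 - y ^ 2 * (π - y) ^ 2)
          = π ^ 2 * (y ^ 3 * (π - 2 * y) ^ 5)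
            + (10 * π ^ 2 - π ^ 4 / 3) * (y ^ 4 * (π - 2 * y) ^ 4)
            + (40 * π ^ 2 - 7 * π ^ 4 / 3) * (y ^ 5 * (π - 2 * y) ^ 3)
            + (80 * π ^ 2 - 19 * π ^ 4 / 3 + π ^ 6 / 36) * (y ^ 6 * (π - 2 * y) ^ 2)
            + (80 * π ^ 2 - 8 * π ^ 4 + π ^ 6 / 12) * (y ^ 7 * (π - 2 * y))
            + (32 * π ^ 2 - 4 * π ^ 4 + π ^ 6 / 12) * y ^ 8 := by ring
      have hp6 : (0:ℝ) < π ^ 6 := by positivity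
      by_contra hcon
      push_neg at hcon
      have : π ^ 6 * ((π ^ 2 - π * y + y ^ 2) * (y - y ^ 3 / 6) ^ 2 - y ^ 2 * (π - y) ^ 2) ≤ 0 :=
        mul_nonpos_of_nonneg_of_nonpos hp6.le hcon
      linarith
    have := mul_le_mul_of_nonneg_left hsq hfac.le
    linarith
  rcases le_or_gt x (π / 2) with h | h
  · exact main x hx h
  · have hsym := main (π - x) (by linarith) (by linarith)
    rw [Real.sin_pi_sub] at hsym
    have heq : π ^ 2 - π * (π - x) + (π - x) ^ 2 = π ^ 2 - π * x + x ^ 2 := by ring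
    rw [heq] at hsym
    nlinarith [hsym]
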